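/- arXiv:1611.10133 — 2 statements merged into one kernel-verified Lean document; each statement's English description precedes it below -/
import Mathlib

section
/- Let F be a finite family of subsets of a finite set X, let d ≥ 1 and let m ≥ 0 be an integer threshold. Call a subfamily A ⊆ F good if there do not exist i with 1 ≤ i ≤ d and sets A_1, ..., A_i ∈ F \ A such that |(A_1 ∪ ... ∪ A_i) \ (⋃A)| < i·m. Then there exists a good subfamily A ⊆ F with |⋃A| ≤ |A|·m. -/
open Finset

theorem stmt_4 {X : Type*} [DecidableEq X] [Fintype X]
    (F : Finset (Finset X)) (d m : ℕ) (hd : 1 ≤ d) :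
    ∃ A ⊆ F,
      (¬ ∃ B ⊆ F \ A, B.Nonempty ∧ B.card ≤ d ∧
          ((B.sup id) \ (A.sup id)).card < B.card * m) ∧
      (A.sup id).card ≤ A.card * m := by
  classical
  obtain ⟨A, hA, hmax⟩ := Finset.exists_max_image
    (F.powerset.filter (fun A => (A.sup id).card ≤ A.card * m)) Finset.card
    ⟨∅, by simp⟩
  simp only [Finset.mem_filter, Finset.mem_powerset] at hA
  obtain ⟨hAF, hAb⟩ := hA
  refine ⟨A, hAF, ?_, hAb⟩
  rintro ⟨B, hB, hBne, _hBd, hlt⟩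
  have hdisj : Disjoint A B := by
    intro s hsA hsB x hx
    have := hB (hsB hx)
    rw [Finset.mem_sdiff] at this
    exact absurd (hsA hx) this.2
  have hBF : B ⊆ F := hB.trans (Finset.sdiff_subset)
  have hcard : (A ∪ B).card = A.card + B.card :=
    Finset.card_union_of_disjoint hdisj
  have hsup : (A ∪ B).sup id = A.sup id ∪ B.sup id := Finset.sup_union
  have hbound : ((A ∪ B).sup id).card ≤ (A ∪ B).card * m := by
    rw [hsup, hcard, add_mul]
    calc (A.sup id ∪ B.sup id).card
        = (A.sup id ∪ (B.sup id \ A.sup id)).card := by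
          rw [Finset.union_sdiff_self_eq_union]
      _ ≤ (A.sup id).card + (B.sup id \ A.sup id).card := Finset.card_union_le _ _
      _ ≤ A.card * m + B.card * m := Nat.add_le_add hAb hlt.le
  have hmem : A ∪ B ∈ F.powerset.filter (fun A => (A.sup id).card ≤ A.card * m) := by
    simp only [Finset.mem_filter, Finset.mem_powerset]
    exact ⟨Finset.union_subset hAF hBF, hbound⟩
  have := hmax _ hmem
  rw [hcard] at this
  have := Finset.card_pos.mpr hBne
  omega
end

section
/- Let n ≥ 1. Suppose F = {F_1, ..., F_k} is a family of subsets of [n] = {1,...,n} with the following property: there exists a function g from {0,1}^k to [n] ∪ {⊥} such that for every subset S ⊆ [n], letting a(S) ∈ {0,1}^k be defined by a(S)_j = 1 iff F_j ∩ S ≠ ∅, we have g(a(S)) ∈ S whenever S ≠ ∅, and g(a(S)) = ⊥ iff S = ∅. Then k ≥ n. -/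
theorem stmt_7 (n k : ℕ) (hn : 1 ≤ n)
    (F : Fin k → Finset (Fin n))
    (g : (Fin k → Bool) → Option (Fin n))
    (hg : ∀ S : Finset (Fin n),
      (S.Nonempty → ∃ x ∈ S, g (fun j => decide ((F j ∩ S).Nonempty)) = some x) ∧
      (g (fun j => decide ((F j ∩ S).Nonempty)) = none ↔ S = ∅)) :
    n ≤ k := by
  have key : ∀ S : Finset (Fin n), ∃ φ : Fin n → ℕ,
      Set.InjOn φ ↑S ∧ ∀ x ∈ S, ∃ h : φ x < k, (F ⟨φ x, h⟩ ∩ S).Nonempty := by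
    intro S
    induction S using Finset.strongInduction with
    | _ S ih =>
      rcases S.eq_empty_or_nonempty with rfl | hS
      · exact ⟨fun _ => 0, by simp, by simp⟩
      · obtain ⟨a, haS, hga⟩ := (hg S).1 hS
        set S' := S.erase a with hS'def
        have hsub : S' ⊆ S := Finset.erase_subset a S
        have hne : (fun j => decide ((F j ∩ S).Nonempty)) ≠
            (fun j => decide ((F j ∩ S').Nonempty)) := by
          intro h
          rcases S'.eq_empty_or_nonempty with he | hne'
          · have h2 := ((hg S').2).2 he
            rw [← h, hga] at h2
            exact Option.some_ne_none a h2
          · obtain ⟨b, hbS', hgb⟩ := (hg S').1 hne'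
            rw [← h, hga] at hgb
            have hab : a = b := Option.some_injective _ hgb
            rw [← hab] at hbS'
            exact (Finset.notMem_erase a S) hbS'
        obtain ⟨j, hj⟩ := Function.ne_iff.mp hne
        have himp : (F j ∩ S').Nonempty → (F j ∩ S).Nonempty := fun ⟨x, hx⟩ =>
          ⟨x, Finset.mem_inter.mpr ⟨(Finset.mem_inter.mp hx).1,
            hsub (Finset.mem_inter.mp hx).2⟩⟩
        have hjS : (F j ∩ S).Nonempty := by
          by_contra hc
          rcases (F j ∩ S').eq_empty_or_nonempty with he | hne'
          · apply hj; simp [hc, he]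
          · exact hc (himp hne')
        have hjS' : F j ∩ S' = ∅ := by
          by_contra hc
          apply hj
          simp [hjS, Finset.nonempty_of_ne_empty hc]
        obtain ⟨φ, hinj, hφ⟩ := ih S' (Finset.erase_ssubset haS)
        refine ⟨Function.update φ a j.val, ?_, ?_⟩
        · intro x hx y hy hxy
          rw [Finset.mem_coe] at hx hy
          by_cases hxa : x = a <;> by_cases hya : y = a
          · rw [hxa, hya]
          · exfalso
            have hyS' : y ∈ S' := Finset.mem_erase.mpr ⟨hya, hy⟩
            obtain ⟨hk', hne'⟩ := hφ y hyS'
            rw [hxa, Function.update_self, Function.update_of_ne hya] at hxy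
            have : (⟨φ y, hk'⟩ : Fin k) = j := Fin.ext hxy.symm
            rw [this, hjS'] at hne'
            exact Finset.not_nonempty_empty hne'
          · exfalso
            have hxS' : x ∈ S' := Finset.mem_erase.mpr ⟨hxa, hx⟩
            obtain ⟨hk', hne'⟩ := hφ x hxS'
            rw [hya, Function.update_self, Function.update_of_ne hxa] at hxy
            have : (⟨φ x, hk'⟩ : Fin k) = j := Fin.ext hxy
            rw [this, hjS'] at hne'
            exact Finset.not_nonempty_empty hne'
          · rw [Function.update_of_ne hxa, Function.update_of_ne hya] at hxy
            exact hinj (Finset.mem_coe.mpr (Finset.mem_erase.mpr ⟨hxa, hx⟩))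
              (Finset.mem_coe.mpr (Finset.mem_erase.mpr ⟨hya, hy⟩)) hxy
        · intro x hx
          by_cases hxa : x = a
          · subst hxa
            rw [Function.update_self]
            exact ⟨j.isLt, by simpa using hjS⟩
          · have hxS' : x ∈ S' := Finset.mem_erase.mpr ⟨hxa, hx⟩
            obtain ⟨hk', hne'⟩ := hφ x hxS'
            rw [Function.update_of_ne hxa]
            exact ⟨hk', hne'.mono (Finset.inter_subset_inter le_rfl hsub)⟩
  obtain ⟨φ, hinj, hφ⟩ := key Finset.univ
  calc n = (Finset.univ : Finset (Fin n)).card := (Finset.card_fin n).symm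
    _ ≤ (Finset.range k).card := by
        apply Finset.card_le_card_of_injOn φ
        · intro x hx
          obtain ⟨h, _⟩ := hφ x hx
          exact Finset.mem_range.mpr h
        · intro x hx y hy
          exact hinj (by simp) (by simp)
    _ = k := Finset.card_range k
end
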